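/- Let P be a pointed poset and F : P^op → Ab a functor with a lower factoring section S such that F(*) = 0. Let u ∈ P be a minimal element. Then the assignment F_u(x) = S(ι_{u,x})(F(u)) for x ≥ u and F_u(x) = 0 otherwise, with structure maps the restrictions of those of F, defines a subfunctor F_u ≤ F that is locally constant on P_{≥u} with all structure maps in P_{≥u} isomorphisms onto F(u), and which vanishes outside P_{≥u}. -/

import Mathlib

open CategoryTheory Opposite

universe u

variable {P : Type u} [PartialOrder P]

attribute [local instance] Classical.propDecidable

/-- A section of a functor `F : Pᵒᵖ ⥤ Ab` on a poset. -/
structure FunctorSection (F : Pᵒᵖ ⥤ AddCommGrpCat.{u}) where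
  sec : ∀ {p q : P}, p ≤ q → (F.obj (op p) ⟶ F.obj (op q))
  sec_refl : ∀ p : P, sec (le_refl p) = 𝟙 _
  sec_comp : ∀ {p q r : P} (h1 : p ≤ q) (h2 : q ≤ r), sec (h1.trans h2) = sec h1 ≫ sec h2
  is_section : ∀ {p q : P} (h : p ≤ q), sec h ≫ F.map (homOfLE h).op = 𝟙 _

/-- A section `S` of `F` is lower factoring. -/
def LowerFactoring (F : Pᵒᵖ ⥤ AddCommGrpCat.{u}) (S : FunctorSection F) : Prop :=
  ∀ (x y z : P) (hx : x ≤ z) (hy : y ≤ z),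
    ∃ (w : P) (hwx : w ≤ x) (hwy : w ≤ y),
      S.sec hx ≫ F.map (homOfLE hy).op = F.map (homOfLE hwx).op ≫ S.sec hwy

/-- The subgroup `F_u(q) = S(ι_{u,q})(F(u))` for `q ≥ u`, and `0` otherwise. -/
noncomputable def Fu (F : Pᵒᵖ ⥤ AddCommGrpCat.{u}) (S : FunctorSection F) (u q : P) :
    AddSubgroup (F.obj (op q)) :=
  if h : u ≤ q then AddSubgroup.map (S.sec h).hom ⊤ else ⊥

lemma my_comp_apply {A B C : AddCommGrpCat.{u}} (f : A ⟶ B) (g : B ⟶ C) (a : A) :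
    (f ≫ g) a = g (f a) := rfl

lemma my_sec_apply (F : Pᵒᵖ ⥤ AddCommGrpCat.{u}) (S : FunctorSection F) {p q : P}
    (h : p ≤ q) (a : F.obj (op p)) :
    F.map (homOfLE h).op (S.sec h a) = a := by
  have := ConcreteCategory.congr_hom (S.is_section h) a
  simpa using this

lemma my_map_comp (F : Pᵒᵖ ⥤ AddCommGrpCat.{u}) {p q r : P} (h1 : p ≤ q) (h2 : q ≤ r)
    (a : F.obj (op r)) :
    F.map (homOfLE h1).op (F.map (homOfLE h2).op a) = F.map (homOfLE (h1.trans h2)).op a := by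
  rw [← my_comp_apply, ← F.map_comp]
  rfl

lemma my_key [OrderBot P] (F : Pᵒᵖ ⥤ AddCommGrpCat.{u}) (S : FunctorSection F)
    (hS : LowerFactoring F S) (hFbot : ∀ a : F.obj (op (⊥ : P)), a = 0)
    {u : P} (hu : IsAtom u) {p q : P} (hup : u ≤ p) (hpq : p ≤ q)
    (huq : u ≤ q) (b : F.obj (op u)) :
    F.map (homOfLE hpq).op (S.sec huq b) = S.sec hup b := by
  obtain ⟨w, hwu, hwp, heq⟩ := hS u p q huq hpq
  have h1 : F.map (homOfLE hpq).op (S.sec huq b) = S.sec hwp (F.map (homOfLE hwu).op b) :=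
    ConcreteCategory.congr_hom heq b
  rcases hu.le_iff.mp hwu with hw | hw
  · subst hw
    have hz : F.map (homOfLE hwu).op b = 0 := hFbot _
    rw [hz, map_zero] at h1
    have hb : b = 0 := by
      have h2 := congrArg (F.map (homOfLE hup).op) h1
      rw [my_map_comp, my_sec_apply, map_zero] at h2
      exact h2
    rw [hb, map_zero, map_zero, map_zero]
  · subst hw
    have hid : F.map (homOfLE hwu).op b = b := by
      have h3 : (homOfLE hwu).op = 𝟙 (op w) := rfl
      rw [h3, F.map_id]
      rfl
    rw [h1, hid]

/-- **Lemma.** If `F(⊥) = 0` and `S` is a lower factoring section of `F`, then for any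
minimal element (atom) `u`, the assignment `F_u` is a subfunctor of `F` that vanishes
outside `P_{≥u}` and is locally constant on `P_{≥u}`, all its values being isomorphic
images of `F(u)` under the section maps. -/
theorem Fu_subfunctor
    [OrderBot P]
    (F : Pᵒᵖ ⥤ AddCommGrpCat.{u}) (S : FunctorSection F) (hS : LowerFactoring F S)
    (hFbot : ∀ a : F.obj (op (⊥ : P)), a = 0)
    (u : P) (hu : IsAtom u) :
    -- `F_u` vanishes outside `P_{≥u}`
    (∀ q : P, ¬ u ≤ q → Fu F S u q = ⊥) ∧
    -- `F_u` is a subfunctor of `F`: structure maps of `F` restrict to `F_u`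
    (∀ (p q : P) (h : p ≤ q), ∀ a ∈ Fu F S u q, F.map (homOfLE h).op a ∈ Fu F S u p) ∧
    -- `F_u` is locally constant on `P_{≥u}`: all structure maps there are isomorphisms
    (∀ (p q : P) (h : p ≤ q), u ≤ p →
      Set.BijOn (F.map (homOfLE h).op) (Fu F S u q) (Fu F S u p)) ∧
    -- each value on `P_{≥u}` is isomorphic to `F(u)` via the section map
    (∀ (p : P) (h : u ≤ p), Set.BijOn (S.sec h) Set.univ (Fu F S u p)) := by
  have mem_fu : ∀ {p : P} (h : u ≤ p) (a : F.obj (op p)),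
      a ∈ Fu F S u p ↔ ∃ b, S.sec h b = a := by
    intro p h a
    rw [Fu, dif_pos h]
    simp [AddSubgroup.mem_map]
  have sub : ∀ (p q : P) (h : p ≤ q), ∀ a ∈ Fu F S u q,
      F.map (homOfLE h).op a ∈ Fu F S u p := by
    intro p q h a ha
    by_cases hq : u ≤ q
    · obtain ⟨b, rfl⟩ := (mem_fu hq a).mp ha
      by_cases hp : u ≤ p
      · exact (mem_fu hp _).mpr ⟨b, (my_key F S hS hFbot hu hp h hq b).symm⟩
      · obtain ⟨w, hwu, hwp, heq⟩ := hS u p q hq h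
        have h1 : F.map (homOfLE h).op (S.sec hq b) = S.sec hwp (F.map (homOfLE hwu).op b) :=
          ConcreteCategory.congr_hom heq b
        have hw : w = ⊥ := by
          rcases hu.le_iff.mp hwu with hw | hw
          · exact hw
          · exact absurd (hw ▸ hwp) hp
        subst hw
        have hz : F.map (homOfLE hwu).op b = 0 := hFbot _
        rw [hz, map_zero] at h1
        rw [Fu, dif_neg hp]
        simpa using h1
    · have : a = 0 := by
        rw [Fu, dif_neg hq] at ha
        simpa using ha
      rw [this, map_zero]
      exact zero_mem _
  refine ⟨?_, sub, ?_, ?_⟩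
  · intro q hq
    rw [Fu, dif_neg hq]
  · intro p q h hup
    have huq : u ≤ q := hup.trans h
    refine ⟨fun a ha => sub p q h a ha, ?_, ?_⟩
    · intro a₁ ha₁ a₂ ha₂ heq
      obtain ⟨b₁, rfl⟩ := (mem_fu huq a₁).mp ha₁
      obtain ⟨b₂, rfl⟩ := (mem_fu huq a₂).mp ha₂
      rw [my_key F S hS hFbot hu hup h huq b₁,
        my_key F S hS hFbot hu hup h huq b₂] at heq
      have : b₁ = b₂ := by
        have := congrArg (F.map (homOfLE hup).op) heq
        rwa [my_sec_apply, my_sec_apply] at this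
      rw [this]
    · intro c hc
      obtain ⟨b, rfl⟩ := (mem_fu hup c).mp hc
      exact ⟨S.sec huq b, (mem_fu huq _).mpr ⟨b, rfl⟩,
        my_key F S hS hFbot hu hup h huq b⟩
  · intro p h
    refine ⟨fun a _ => (mem_fu h _).mpr ⟨a, rfl⟩, ?_, ?_⟩
    · intro a₁ _ a₂ _ heq
      have := congrArg (F.map (homOfLE h).op) heq
      rwa [my_sec_apply, my_sec_apply] at this
    · intro c hc
      obtain ⟨b, rfl⟩ := (mem_fu h c).mp hc
      exact ⟨b, Set.mem_univ b, rfl⟩
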